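/- Let m, d be integers with d odd and gcd(4m+1, d) = 1, set n = −d·(4m+1+16d), and let p be an odd prime. Let (x₀, y₀) ∈ 𝔽_p × 𝔽_p be given by x₀ = −(4m+1+16d)·4⁻¹ and y₀ = (4m+1+16d)·8⁻¹ (inverses taken in 𝔽_p). Then (x₀, y₀) is a singular point of the reduction modulo p of the Weierstrass curve y² + xy = x³ + m·x² + n·x if and only if p divides (4m+1+16d)·(4m+1+32d). (Here one uses the integer identity 16m² + 192md + 8m + 512d² + 48d + 1 = (4m+1+16d)·(4m+1+32d).) -/

import Mathlib

/-- The Weierstrass curve `y² + xy = x³ + m·x² + n·x` over `ℤ`. -/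
def WmnZ (m n : ℤ) : WeierstrassCurve ℤ :=
  { a₁ := 1, a₂ := m, a₃ := 0, a₄ := n, a₆ := 0 }

/-- Let `m, d` be integers with `d` odd and `gcd(4m+1, d) = 1`, set `n = −d·(4m+1+16d)`, and
let `p` be an odd prime.  Let `(x₀, y₀) ∈ 𝔽_p × 𝔽_p` be given by
`x₀ = −(4m+1+16d)·4⁻¹` and `y₀ = (4m+1+16d)·8⁻¹` (inverses taken in `𝔽_p`).  Then
`(x₀, y₀)` is a singular point of the reduction modulo `p` of the Weierstrass curve
`y² + xy = x³ + m·x² + n·x` if and only if `p` divides `(4m+1+16d)·(4m+1+32d)`. -/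
theorem stmt_17 (m d : ℤ) (hd : Odd d) (hgcd : Int.gcd (4 * m + 1) d = 1)
    (n : ℤ) (hn : n = -d * (4 * m + 1 + 16 * d)) (p : ℕ) (hp : p.Prime) (hp2 : p ≠ 2) :
    (((WmnZ m n).map (Int.castRingHom (ZMod p))).toAffine.Equation
        (-((4 * m + 1 + 16 * d : ℤ) : ZMod p) * (4 : ZMod p)⁻¹)
        (((4 * m + 1 + 16 * d : ℤ) : ZMod p) * (8 : ZMod p)⁻¹) ∧
      ¬ ((WmnZ m n).map (Int.castRingHom (ZMod p))).toAffine.Nonsingular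
        (-((4 * m + 1 + 16 * d : ℤ) : ZMod p) * (4 : ZMod p)⁻¹)
        (((4 * m + 1 + 16 * d : ℤ) : ZMod p) * (8 : ZMod p)⁻¹)) ↔
    (p : ℤ) ∣ (4 * m + 1 + 16 * d) * (4 * m + 1 + 32 * d) := by
  haveI : Fact p.Prime := ⟨hp⟩
  have h2 : (2 : ZMod p) ≠ 0 := by
    intro h
    have hdvd : p ∣ 2 := (ZMod.natCast_eq_zero_iff 2 p).mp (by exact_mod_cast h)
    exact hp2 ((Nat.prime_dvd_prime_iff_eq hp Nat.prime_two).mp hdvd)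
  have h4 : (4 : ZMod p) ≠ 0 := by
    have : (4 : ZMod p) = 2 * 2 := by norm_num
    rw [this]; exact mul_ne_zero h2 h2
  have h8 : (8 : ZMod p) ≠ 0 := by
    have : (8 : ZMod p) = 2 * 4 := by norm_num
    rw [this]; exact mul_ne_zero h2 h4
  set a : ZMod p := ((4 * m + 1 + 16 * d : ℤ) : ZMod p) with ha
  set b : ZMod p := ((4 * m + 1 + 32 * d : ℤ) : ZMod p) with hb
  have hrhs : (p : ℤ) ∣ (4 * m + 1 + 16 * d) * (4 * m + 1 + 32 * d) ↔ a * b = 0 := by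
    rw [← ZMod.intCast_zmod_eq_zero_iff_dvd]
    push_cast [ha, hb]
    ring_nf
  have heq : ((WmnZ m n).map (Int.castRingHom (ZMod p))).toAffine.Equation
      (-a * (4 : ZMod p)⁻¹) (a * (8 : ZMod p)⁻¹) := by
    rw [WeierstrassCurve.Affine.equation_iff]
    simp only [WmnZ, WeierstrassCurve.map, ha, map_one, map_zero, eq_intCast]
    push_cast [hn]
    field_simp
    ring
  have hY : (2 : ZMod p) * (a * (8 : ZMod p)⁻¹) +
      ((WmnZ m n).map (Int.castRingHom (ZMod p))).toAffine.a₁ * (-a * (4 : ZMod p)⁻¹) +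
      ((WmnZ m n).map (Int.castRingHom (ZMod p))).toAffine.a₃ = 0 := by
    simp only [WmnZ, WeierstrassCurve.map, map_one, map_zero, eq_intCast]
    push_cast
    field_simp
    ring
  have hX : ((WmnZ m n).map (Int.castRingHom (ZMod p))).toAffine.a₁ * (a * (8 : ZMod p)⁻¹) -
      (3 * (-a * (4 : ZMod p)⁻¹) ^ 2 +
        2 * ((WmnZ m n).map (Int.castRingHom (ZMod p))).toAffine.a₂ * (-a * (4 : ZMod p)⁻¹) +
        ((WmnZ m n).map (Int.castRingHom (ZMod p))).toAffine.a₄) = -(a * b) * (16 : ZMod p)⁻¹ := by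
    have h16 : (16 : ZMod p) ≠ 0 := by
      have : (16 : ZMod p) = 4 * 4 := by norm_num
      rw [this]; exact mul_ne_zero h4 h4
    simp only [WmnZ, WeierstrassCurve.map, ha, hb, map_one, map_zero, eq_intCast]
    push_cast [hn]
    field_simp
    ring
  rw [hrhs, WeierstrassCurve.Affine.nonsingular_iff']
  constructor
  · rintro ⟨-, hns⟩
    by_contra hab
    exact hns ⟨heq, Or.inl (by rw [hX]; exact mul_ne_zero (neg_ne_zero.mpr hab) (inv_ne_zero (by
      have : (16 : ZMod p) = 4 * 4 := by norm_num
      rw [this]; exact mul_ne_zero h4 h4)))⟩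
  · intro hab
    refine ⟨heq, ?_⟩
    rintro ⟨-, h | h⟩
    · exact h (by rw [hX, hab]; simp)
    · exact h hY
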